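/- arXiv:0908.3961 — 6 statements merged into one kernel-verified Lean document; each statement's English description precedes it below -/
import Mathlib

section
/- For every fixed real θ > 0, the limit as α → 1 from below of (1-α)^θ · exp(θ/(1-α) - (θ/(1-α))^α) equals θ^θ. (This identifies the θ-th moment of exp(Y_1), where Y_1 is the distributional limit of Y_α, as θ^θ.) -/
open Filter Real

lemma log_sq_div_tendsto : Tendsto (fun t : ℝ => Real.log t ^ 2 / t) atTop (nhds 0) := by
  have := Real.tendsto_pow_log_div_mul_add_atTop 1 0 2 one_ne_zero
  simpa using this

lemma H_tendsto (θ : ℝ) (hθ : 0 < θ) :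
    Tendsto (fun t : ℝ => t - t ^ (1 - θ / t) - θ * Real.log t) atTop (nhds 0) := by
  have hs : Tendsto (fun t : ℝ => θ * Real.log t / t) atTop (nhds 0) := by
    have h := (Real.tendsto_pow_log_div_mul_add_atTop 1 0 1 one_ne_zero).const_mul θ
    simpa [mul_div_assoc] using h
  -- squeeze
  apply squeeze_zero_norm' (a := fun t => θ ^ 2 * (Real.log t ^ 2 / t))
  · filter_upwards [eventually_ge_atTop (1 : ℝ),
      (hs.eventually (eventually_le_nhds (by norm_num : (0:ℝ) < 1)))] with t ht hst
    have ht0 : 0 < t := lt_of_lt_of_le one_pos ht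
    have hlog : 0 ≤ Real.log t := Real.log_nonneg ht
    set s := θ * Real.log t / t with hsdef
    have hs0 : 0 ≤ s := by positivity
    have hrw : t ^ (1 - θ / t) = t * Real.exp (-s) := by
      rw [Real.rpow_def_of_pos ht0]
      rw [show Real.log t * (1 - θ / t) = Real.log t + (-s) by
        field_simp [hsdef]; rw [hsdef]; field_simp; ring]
      rw [Real.exp_add, Real.exp_log ht0]
    have hts : θ * Real.log t = t * s := by field_simp [hsdef]; rw [hsdef]; field_simp
    have : t - t ^ (1 - θ / t) - θ * Real.log t = -(t * (Real.exp (-s) - 1 - (-s))) := by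
      rw [hrw, hts]; ring
    rw [this, norm_neg, norm_mul, Real.norm_eq_abs, Real.norm_eq_abs,
      abs_of_pos ht0]
    have habs : |(-s)| ≤ 1 := by rw [abs_neg, abs_of_nonneg hs0]; exact hst
    calc t * |Real.exp (-s) - 1 - (-s)| ≤ t * ((-s) ^ 2) := by
          exact mul_le_mul_of_nonneg_left (Real.abs_exp_sub_one_sub_id_le habs) ht0.le
      _ = θ ^ 2 * (Real.log t ^ 2 / t) := by
          rw [neg_sq, hsdef]; field_simp
  · simpa using log_sq_div_tendsto.const_mul (θ ^ 2)

/-- For every fixed real `θ > 0`, the limit as `α → 1⁻` of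
`(1-α)^θ exp(θ/(1-α) - (θ/(1-α))^α)` equals `θ^θ`:
the `θ`-th moment of `exp(Y₁)` is `θ^θ`. -/
theorem moment_limit (θ : ℝ) (hθ : 0 < θ) :
    Tendsto (fun α : ℝ =>
        (1 - α) ^ θ * Real.exp (θ / (1 - α) - (θ / (1 - α)) ^ α))
      (nhdsWithin 1 (Set.Iio 1)) (nhds (θ ^ θ)) := by
  -- the inner map t = θ/(1-α) tends to atTop
  have htend : Tendsto (fun α : ℝ => θ / (1 - α)) (nhdsWithin 1 (Set.Iio 1)) atTop := by
    have h1 : Tendsto (fun α : ℝ => 1 - α) (nhdsWithin 1 (Set.Iio 1)) (nhdsWithin 0 (Set.Ioi 0)) := by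
      apply tendsto_nhdsWithin_of_tendsto_nhds_of_eventually_within
      · have : Tendsto (fun α : ℝ => 1 - α) (nhds 1) (nhds 0) := by
          have h := ((continuous_const.sub continuous_id) : Continuous fun α : ℝ => 1 - α).tendsto 1
          have h' : Tendsto (fun α : ℝ => 1 - α) (nhds 1) (nhds (1 - 1)) := h
          simpa using h'
        exact this.mono_left nhdsWithin_le_nhds
      · filter_upwards [self_mem_nhdsWithin] with α (hα : α < 1)
        simpa using hα
    have h2 : Tendsto (fun x : ℝ => θ / x) (nhdsWithin 0 (Set.Ioi 0)) atTop := by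
      simpa [div_eq_mul_inv] using tendsto_inv_nhdsGT_zero.const_mul_atTop hθ
    exact h2.comp h1
  -- rewrite as exp of sum, use composition
  have key : Tendsto (fun α : ℝ =>
      θ * Real.log θ + ((θ / (1 - α)) - (θ / (1 - α)) ^ α - θ * Real.log (θ / (1 - α))))
      (nhdsWithin 1 (Set.Iio 1)) (nhds (θ * Real.log θ + 0)) := by
    apply Tendsto.const_add
    have := (H_tendsto θ hθ).comp htend
    apply this.congr'
    filter_upwards [self_mem_nhdsWithin] with α (hα : α < 1)
    have h1α : 0 < 1 - α := by linarith
    have ht0 : 0 < θ / (1 - α) := div_pos hθ h1α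
    simp only [Function.comp]
    congr 2
    congr 1
    field_simp
    ring
  have heq : ∀ᶠ α in nhdsWithin 1 (Set.Iio 1),
      Real.exp (θ * Real.log θ + ((θ / (1 - α)) - (θ / (1 - α)) ^ α - θ * Real.log (θ / (1 - α)))) =
      (1 - α) ^ θ * Real.exp (θ / (1 - α) - (θ / (1 - α)) ^ α) := by
    filter_upwards [self_mem_nhdsWithin] with α (hα : α < 1)
    have h1α : 0 < 1 - α := by linarith
    have ht0 : 0 < θ / (1 - α) := div_pos hθ h1α
    rw [Real.rpow_def_of_pos h1α, ← Real.exp_add]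
    congr 1
    have hlog : Real.log (θ / (1 - α)) = Real.log θ - Real.log (1 - α) :=
      Real.log_div hθ.ne' h1α.ne'
    rw [hlog]; ring
  have hfinal := (Real.continuous_exp.tendsto _).comp key
  rw [add_zero] at hfinal
  have : Real.exp (θ * Real.log θ) = θ ^ θ := by
    rw [Real.rpow_def_of_pos hθ]; ring_nf
  rw [this] at hfinal
  exact (hfinal.congr' heq)
end

section
/- For every fixed real θ ≠ 0, the limit as α → 1 from below of exp(iθ·[1/(1-α) + log(1-α)] - (iθ/(1-α))^α) equals exp(-π|θ|/2 + iθ log|θ|), where the complex power (iθ/(1-α))^α is taken with the principal branch. -/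
open Filter Real

namespace CfAux

noncomputable def A (θ : ℝ) : ℝ := if 0 < θ then π / 2 else -(π / 2)

lemma theta_mul_A {θ : ℝ} (hθ : θ ≠ 0) : θ * A θ = |θ| * (π / 2) := by
  unfold A
  rcases hθ.lt_or_gt with h | h
  · rw [if_neg (not_lt.2 h.le), abs_of_neg h]; ring
  · rw [if_pos h, abs_of_pos h]

lemma abs_A (θ : ℝ) : |A θ| ≤ π / 2 := by
  unfold A
  have h := pi_nonneg
  split
  · rw [abs_of_nonneg (by positivity)]
  · rw [abs_neg, abs_of_nonneg (by positivity)]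

noncomputable def Lc (θ ε : ℝ) : ℂ :=
  ((Real.log (|θ| / ε) : ℝ) : ℂ) + (A θ : ℂ) * Complex.I

lemma base_ne_zero {θ ε : ℝ} (hθ : θ ≠ 0) (hε : 0 < ε) :
    (Complex.I * (θ : ℂ) / (ε : ℂ)) ≠ 0 :=
  div_ne_zero (mul_ne_zero Complex.I_ne_zero (by exact_mod_cast hθ))
    (by exact_mod_cast hε.ne')

lemma arg_eq {θ ε : ℝ} (hθ : θ ≠ 0) (hε : 0 < ε) :
    (Complex.I * (θ : ℂ) / (ε : ℂ)).arg = A θ := by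
  have hz : (Complex.I * (θ : ℂ) / (ε : ℂ)) = ((θ / ε : ℝ) : ℂ) * Complex.I := by
    have : (ε : ℂ) ≠ 0 := by exact_mod_cast hε.ne'
    push_cast
    ring
  rw [hz]
  rcases hθ.lt_or_gt with h | h
  · have h2 : 0 < -(θ / ε) := neg_pos.2 (div_neg_of_neg_of_pos h hε)
    have : ((θ / ε : ℝ) : ℂ) * Complex.I = ((-(θ / ε) : ℝ) : ℂ) * (-Complex.I) := by
      push_cast; ring
    rw [this, Complex.arg_real_mul _ h2, Complex.arg_neg_I, A, if_neg (not_lt.2 h.le)]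
  · rw [Complex.arg_real_mul _ (div_pos h hε), Complex.arg_I, A, if_pos h]

lemma abs_eq {θ ε : ℝ} (hε : 0 < ε) :
    ‖Complex.I * (θ : ℂ) / (ε : ℂ)‖ = |θ| / ε := by
  simp [abs_of_pos hε]

lemma log_eq {θ ε : ℝ} (hθ : θ ≠ 0) (hε : 0 < ε) :
    Complex.log (Complex.I * (θ : ℂ) / (ε : ℂ)) = Lc θ ε := by
  rw [Complex.log, abs_eq hε, arg_eq hθ hε, Lc, Complex.ofReal_log]
  positivity

lemma cpow_eq {θ ε : ℝ} (hθ : θ ≠ 0) (hε : 0 < ε) :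
    (Complex.I * (θ : ℂ) / (ε : ℂ)) ^ ((1 - ε : ℝ) : ℂ) =
      (Complex.I * (θ : ℂ) / (ε : ℂ)) * Complex.exp (-(ε : ℂ) * Lc θ ε) := by
  have hz := base_ne_zero hθ hε
  rw [Complex.cpow_def_of_ne_zero hz, log_eq hθ hε,
    show Lc θ ε * ((1 - ε : ℝ) : ℂ) = Complex.log (Complex.I * (θ : ℂ) / (ε : ℂ)) +
      (-(ε : ℂ)) * Lc θ ε by rw [log_eq hθ hε]; push_cast; ring,
    Complex.exp_add, Complex.exp_log hz]

noncomputable def Cv (θ : ℝ) : ℂ :=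
  -(((π * |θ| : ℝ) : ℂ) / 2) + Complex.I * (θ : ℂ) * ((Real.log |θ| : ℝ) : ℂ)

noncomputable def R (θ ε : ℝ) : ℂ :=
  (-(Complex.I * (θ : ℂ) / (ε : ℂ))) *
    (Complex.exp (-(ε : ℂ) * Lc θ ε) - 1 - (-(ε : ℂ) * Lc θ ε))

lemma G_eq {θ ε : ℝ} (hθ : θ ≠ 0) (hε : 0 < ε) :
    Complex.I * (θ : ℂ) * ((1 / ε + Real.log ε : ℝ) : ℂ) -
      (Complex.I * (θ : ℂ) / (ε : ℂ)) ^ ((1 - ε : ℝ) : ℂ) = Cv θ + R θ ε := by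
  rw [cpow_eq hθ hε, Cv, R, Lc, Real.log_div (abs_ne_zero.2 hθ) hε.ne']
  have he : (ε : ℂ) ≠ 0 := by exact_mod_cast hε.ne'
  have hA : (θ : ℂ) * ((A θ : ℝ) : ℂ) = ((|θ| : ℝ) : ℂ) * (((π : ℝ) : ℂ) / 2) := by
    have h0 : ((θ * A θ : ℝ) : ℂ) = ((|θ| * (π / 2) : ℝ) : ℂ) := by
      exact_mod_cast theta_mul_A hθ
    rw [Complex.ofReal_mul, Complex.ofReal_mul, Complex.ofReal_div] at h0
    simpa using h0
  have hI : Complex.I * Complex.I = -1 := Complex.I_mul_I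
  rw [Complex.ofReal_add, Complex.ofReal_div, Complex.ofReal_one, Complex.ofReal_sub,
    Complex.ofReal_mul]
  field_simp
  linear_combination (2 * (θ : ℂ) * ((A θ : ℝ) : ℂ) * (ε : ℂ)) * hI - (2 * (ε : ℂ)) * hA

end CfAux

/-- For every fixed real `θ ≠ 0`, the limit as `α → 1⁻` of
`exp(iθ[1/(1-α) + log(1-α)] - (iθ/(1-α))^α)` (principal-branch complex power) equals
`exp(-π|θ|/2 + iθ log|θ|)`. -/
theorem cf_limit (θ : ℝ) (hθ : θ ≠ 0) :
    Tendsto (fun α : ℝ =>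
        Complex.exp (Complex.I * (θ : ℂ) * ((1 / (1 - α) + Real.log (1 - α) : ℝ) : ℂ) -
          (Complex.I * (θ : ℂ) / ((1 - α : ℝ) : ℂ)) ^ ((α : ℝ) : ℂ)))
      (nhdsWithin 1 (Set.Iio 1))
      (nhds (Complex.exp (-(↑(π * |θ|) / 2) + Complex.I * (θ : ℂ) * ((Real.log |θ| : ℝ) : ℂ)))) := by
  classical
  set l : Filter ℝ := nhdsWithin 0 (Set.Ioi 0) with hl
  set M : ℝ → ℝ := fun ε => |Real.log (|θ|)| + |Real.log ε| + π / 2 with hM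
  set k : ℝ → ℝ := fun ε => Real.sqrt ε * M ε with hk
  have hM0 : ∀ ε : ℝ, 0 ≤ M ε := by
    intro ε
    have := pi_nonneg
    simp only [hM]
    positivity
  -- k → 0
  have hsqrt : Tendsto Real.sqrt l (nhds 0) := by
    simpa using (Real.continuous_sqrt.tendsto 0).mono_left nhdsWithin_le_nhds
  have hlogsqrt : Tendsto (fun ε : ℝ => Real.sqrt ε * |Real.log ε|) l (nhds 0) := by
    have h := tendsto_log_mul_rpow_nhdsGT_zero (r := 1/2) (by norm_num)
    have h2 : Tendsto (fun ε : ℝ => -(Real.log ε * ε ^ (1/2 : ℝ))) l (nhds 0) := by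
      simpa using h.neg
    apply h2.congr'
    filter_upwards [self_mem_nhdsWithin, Ioo_mem_nhdsGT zero_lt_one] with ε hε hε1
    have hε0 : (0:ℝ) < ε := hε
    have hlog : Real.log ε < 0 := Real.log_neg hε0 hε1.2
    rw [Real.sqrt_eq_rpow, abs_of_neg hlog]
    ring
  have hkt : Tendsto k l (nhds 0) := by
    have : Tendsto (fun ε : ℝ => Real.sqrt ε * |Real.log (|θ|)| +
        Real.sqrt ε * |Real.log ε| + Real.sqrt ε * (π / 2)) l (nhds 0) := by
      have := ((hsqrt.mul_const |Real.log (|θ|)|).add hlogsqrt).add (hsqrt.mul_const (π / 2))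
      simpa using this
    apply this.congr
    intro ε
    simp only [hk, hM]
    ring
  -- ε * M ε ≤ k ε eventually, so ε * M ε → 0
  have hεM_le : ∀ᶠ ε in l, ε * M ε ≤ k ε := by
    filter_upwards [self_mem_nhdsWithin, Ioo_mem_nhdsGT zero_lt_one] with ε hε hε1
    have hε0 : (0:ℝ) < ε := hε
    have : ε ≤ Real.sqrt ε := by
      rw [Real.le_sqrt hε0.le hε0.le]
      nlinarith [hε1.2]
    exact mul_le_mul_of_nonneg_right this (hM0 ε)
  have hεM : Tendsto (fun ε => ε * M ε) l (nhds 0) := by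
    apply squeeze_zero_norm' _ hkt
    filter_upwards [hεM_le, self_mem_nhdsWithin] with ε h1 h2
    rwa [Real.norm_eq_abs, abs_of_nonneg (mul_nonneg (le_of_lt h2) (hM0 ε))]
  have hεM_le_one : ∀ᶠ ε in l, ε * M ε ≤ 1 :=
    hεM.eventually (eventually_le_nhds zero_lt_one)
  -- norm of Lc
  have hLc_norm : ∀ ε : ℝ, 0 < ε → ‖CfAux.Lc θ ε‖ ≤ M ε := by
    intro ε hε
    rw [CfAux.Lc]
    refine (norm_add_le _ _).trans ?_
    rw [Complex.norm_real, norm_mul, Complex.norm_real, Complex.norm_I, mul_one,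
      Real.norm_eq_abs, Real.norm_eq_abs, Real.log_div (abs_ne_zero.2 hθ) hε.ne']
    have h1 : |Real.log |θ| - Real.log ε| ≤ |Real.log (|θ|)| + |Real.log ε| := abs_sub _ _
    have h2 := CfAux.abs_A θ
    simp only [hM]
    linarith
  -- R → 0
  have hR : Tendsto (CfAux.R θ) l (nhds 0) := by
    apply squeeze_zero_norm' (a := fun ε => |θ| * k ε ^ 2)
    · filter_upwards [self_mem_nhdsWithin, hεM_le_one] with ε hε h1
      have hε0 : (0:ℝ) < ε := hε
      have hz : ‖-(ε : ℂ) * CfAux.Lc θ ε‖ ≤ ε * M ε := by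
        rw [norm_mul]
        simp only [norm_neg, Complex.norm_real, Real.norm_eq_abs, abs_of_pos hε0]
        exact mul_le_mul_of_nonneg_left (hLc_norm ε hε0) hε0.le
      have hz1 : ‖-(ε : ℂ) * CfAux.Lc θ ε‖ ≤ 1 := hz.trans h1
      have hexp := Complex.norm_exp_sub_one_sub_id_le hz1
      rw [CfAux.R, norm_mul, norm_neg, CfAux.abs_eq hε0]
      have hMn := hM0 ε
      have hb : ‖Complex.exp (-(ε : ℂ) * CfAux.Lc θ ε) - 1 -
          (-(ε : ℂ) * CfAux.Lc θ ε)‖ ≤ (ε * M ε) ^ 2 := by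
        refine hexp.trans ?_
        have := norm_nonneg (-(ε : ℂ) * CfAux.Lc θ ε)
        nlinarith
      calc |θ| / ε * ‖Complex.exp (-(ε : ℂ) * CfAux.Lc θ ε) - 1 -
          (-(ε : ℂ) * CfAux.Lc θ ε)‖ ≤ |θ| / ε * (ε * M ε) ^ 2 := by
            apply mul_le_mul_of_nonneg_left hb
            positivity
        _ = |θ| * k ε ^ 2 := by
            simp only [hk]
            rw [mul_pow, mul_pow, Real.sq_sqrt hε0.le]
            field_simp
    · have h2 : Tendsto (fun ε : ℝ => |θ| * (k ε * k ε)) l (nhds (|θ| * (0 * 0))) :=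
        tendsto_const_nhds.mul (hkt.mul hkt)
      simp only [mul_zero] at h2
      apply h2.congr
      intro ε
      ring
  -- G → Cv
  have hG : Tendsto (fun ε : ℝ =>
      Complex.I * (θ : ℂ) * ((1 / ε + Real.log ε : ℝ) : ℂ) -
        (Complex.I * (θ : ℂ) / (ε : ℂ)) ^ ((1 - ε : ℝ) : ℂ)) l (nhds (CfAux.Cv θ)) := by
    have h1 : Tendsto (fun ε : ℝ => CfAux.Cv θ + CfAux.R θ ε) l (nhds (CfAux.Cv θ + 0)) :=
      tendsto_const_nhds.add hR
    rw [add_zero] at h1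
    apply h1.congr'
    filter_upwards [self_mem_nhdsWithin] with ε hε
    exact (CfAux.G_eq hθ hε).symm
  -- change of variables
  have hmap : Tendsto (fun α : ℝ => 1 - α) (nhdsWithin 1 (Set.Iio 1)) l := by
    apply tendsto_nhdsWithin_of_tendsto_nhds_of_eventually_within
    · have : Tendsto (fun α : ℝ => 1 - α) (nhds 1) (nhds (1 - 1)) :=
        (continuous_const.sub continuous_id).tendsto 1
      simpa using this.mono_left nhdsWithin_le_nhds
    · filter_upwards [self_mem_nhdsWithin] with α hα
      simp only [Set.mem_Iio] at hα
      simp only [Set.mem_Ioi]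
      linarith
  have hcomp := hG.comp hmap
  have hexp := (Complex.continuous_exp.tendsto (CfAux.Cv θ)).comp hcomp
  have hCv : CfAux.Cv θ = -((π * |θ| : ℝ) / 2 : ℂ) + Complex.I * (θ : ℂ) *
      ((Real.log |θ| : ℝ) : ℂ) := by
    rw [CfAux.Cv]
  rw [hCv] at hexp
  apply hexp.congr
  intro α
  simp only [Function.comp_apply, sub_sub_cancel]
end

section
/- For every ζ ∈ (0,1], ζ²/(4^ζ - 1) ≤ 1/3, with equality if and only if ζ = 1. (Hence among ζ ≤ 1 the asymptotic relative efficiency ζ²/[0.3445(4^ζ-1)] of the log-mean estimator is maximized at ζ = 1.) -/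
open Real

lemma log4_bounds : 1.3862943606 < Real.log 4 ∧ Real.log 4 < 1.3862943616 := by
  have h : Real.log 4 = 2 * Real.log 2 := by
    rw [show (4:ℝ) = 2^(2:ℕ) by norm_num, Real.log_pow]; push_cast; ring
  constructor <;> rw [h] <;> nlinarith [Real.log_two_gt_d9, Real.log_two_lt_d9]

lemma cubic_lb (x : ℝ) (hx : 0 ≤ x) :
    1 + x + x^2/2 + x^3/6 ≤ Real.exp x := by
  have := Real.sum_le_exp_of_nonneg hx 4
  simp [Finset.sum_range_succ, Nat.factorial] at this
  linarith

lemma poly_small (L ζ : ℝ) (hL : 1.3862943606 < L) (h0 : 0 < ζ) (h8 : ζ ≤ 0.8) :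
    3 * ζ^2 < L*ζ + (L*ζ)^2/2 + (L*ζ)^3/6 := by
  have ha : (0:ℝ) < 1.3862943606 := by norm_num
  have h1 : (1.3862943606:ℝ) * ζ ≤ L * ζ := by nlinarith
  have h2 : ((1.3862943606:ℝ)*ζ)^2 ≤ (L*ζ)^2 := by gcongr <;> positivity
  have h3 : ((1.3862943606:ℝ)*ζ)^3 ≤ (L*ζ)^3 := by gcongr <;> positivity
  nlinarith [mul_nonneg (sub_nonneg.2 h8) h0.le, sq_nonneg (0.8 - ζ),
      mul_nonneg (mul_nonneg (sub_nonneg.2 h8) h0.le) h0.le,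
      mul_nonneg (mul_nonneg (sub_nonneg.2 h8) (sub_nonneg.2 h8)) h0.le]

lemma small_case (ζ : ℝ) (h0 : 0 < ζ) (h8 : ζ ≤ 0.8) : 3 * ζ^2 < (4:ℝ)^ζ - 1 := by
  have h4 : (4:ℝ)^ζ = Real.exp (Real.log 4 * ζ) := by
    rw [Real.rpow_def_of_pos (by norm_num)]
  have hc := cubic_lb (Real.log 4 * ζ) (by positivity)
  have := poly_small (Real.log 4) ζ log4_bounds.1 h0 h8
  rw [h4]; linarith

lemma deriv_f (x : ℝ) :
    HasDerivAt (fun t : ℝ => (4:ℝ)^t - 1 - 3*t^2) ((4:ℝ)^x * Real.log 4 - 6*x) x := by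
  have h1 : HasDerivAt (fun t : ℝ => (4:ℝ)^t) ((4:ℝ)^x * Real.log 4) x :=
    (Real.hasStrictDerivAt_const_rpow (by norm_num) x).hasDerivAt
  have h2 : HasDerivAt (fun t : ℝ => 3*t^2) (6*x) x := by
    have := (hasDerivAt_pow 2 x).const_mul (3:ℝ)
    simpa using this.congr_deriv (by ring)
  exact (h1.sub_const 1).sub h2

lemma large_case (ζ : ℝ) (h8 : 0.8 ≤ ζ) (h1 : ζ < 1) : 3 * ζ^2 < (4:ℝ)^ζ - 1 := by
  obtain ⟨hL, hU⟩ := log4_bounds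
  have anti : StrictAntiOn (fun t : ℝ => (4:ℝ)^t - 1 - 3*t^2) (Set.Icc 0.8 1) := by
    apply strictAntiOn_of_deriv_neg (convex_Icc _ _)
    · have hc4 : Continuous fun t : ℝ => (4:ℝ)^t :=
        Continuous.rpow continuous_const continuous_id (fun x => Or.inl (by norm_num))
      exact ((hc4.sub continuous_const).sub (by fun_prop)).continuousOn
    · intro x hx
      rw [interior_Icc] at hx
      rw [(deriv_f x).deriv]
      have h4x : (4:ℝ)^x = 4 * Real.exp (Real.log 4 * (x - 1)) := by
        rw [show (4:ℝ) * Real.exp (Real.log 4 * (x-1)) = Real.exp (Real.log 4) * Real.exp (Real.log 4 * (x-1)) by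
              rw [Real.exp_log]; norm_num,
            ← Real.exp_add, Real.rpow_def_of_pos (by norm_num)]
        ring_nf
      have hexp : Real.exp (Real.log 4 * (x - 1)) ≤ 1 / (1 + Real.log 4 * (1 - x)) := by
        have hb := Real.add_one_le_exp (Real.log 4 * (1 - x))
        have hpos : 0 < 1 + Real.log 4 * (1 - x) := by nlinarith [hx.1, hx.2]
        rw [show Real.log 4 * (x-1) = -(Real.log 4 * (1-x)) by ring, Real.exp_neg]
        rw [div_eq_inv_mul, mul_one]
        exact inv_anti₀ hpos (by linarith)
      have hpos : 0 < 1 + Real.log 4 * (1 - x) := by nlinarith [hx.1, hx.2]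
      have hu : (0:ℝ) < x - 0.8 := by linarith [hx.1]
      have hv : (0:ℝ) < 1 - x := by linarith [hx.2]
      have hLpos : (0:ℝ) < Real.log 4 := by linarith
      have key : 4 * Real.log 4 < 6 * x * (1 + Real.log 4 * (1 - x)) := by
        nlinarith [mul_pos hu hv, mul_nonneg (mul_pos hu hv).le hLpos.le,
          mul_nonneg hu.le (by linarith : (0:ℝ) ≤ 1.3862943616 - Real.log 4),
          mul_nonneg hv.le (by linarith : (0:ℝ) ≤ 1.3862943616 - Real.log 4)]
      rw [h4x]
      have : 4 * Real.exp (Real.log 4 * (x-1)) * Real.log 4 ≤ 4 * Real.log 4 / (1 + Real.log 4 * (1 - x)) := by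
        rw [div_eq_mul_inv]
        have := mul_le_mul_of_nonneg_left hexp (by positivity : (0:ℝ) ≤ 4 * Real.log 4)
        calc 4 * Real.exp (Real.log 4 * (x-1)) * Real.log 4
            = 4 * Real.log 4 * Real.exp (Real.log 4 * (x-1)) := by ring
          _ ≤ 4 * Real.log 4 * (1 / (1 + Real.log 4 * (1-x))) := this
          _ = 4 * Real.log 4 * (1 + Real.log 4 * (1-x))⁻¹ := by rw [one_div]
      have h2 : 4 * Real.log 4 / (1 + Real.log 4 * (1 - x)) < 6 * x :=
        (div_lt_iff₀ hpos).2 (by linarith [key])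
      linarith
  have := anti ⟨h8, h1.le⟩ ⟨by linarith, le_refl 1⟩ h1
  simp only [Real.rpow_one] at this
  norm_num at this ⊢
  linarith

/-- For every `ζ ∈ (0,1]`, `ζ²/(4^ζ - 1) ≤ 1/3`, with equality iff `ζ = 1`:
among `ζ ≤ 1` the asymptotic relative efficiency of the log-mean estimator is maximized
at `ζ = 1`. -/
theorem are_max_at_one (ζ : ℝ) (hζ : ζ ∈ Set.Ioc (0 : ℝ) 1) :
    ζ ^ 2 / ((4 : ℝ) ^ ζ - 1) ≤ 1 / 3 ∧ (ζ ^ 2 / ((4 : ℝ) ^ ζ - 1) = 1 / 3 ↔ ζ = 1) := by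
  obtain ⟨h0, h1⟩ := hζ
  have hpos : 0 < (4:ℝ)^ζ - 1 := by
    have := (Real.one_lt_rpow_iff_of_pos (by norm_num : (0:ℝ) < 4)).2
      (Or.inl ⟨by norm_num, h0⟩)
    linarith
  rcases eq_or_lt_of_le h1 with rfl | hlt
  · have : (1:ℝ)^2 / ((4:ℝ)^(1:ℝ) - 1) = 1/3 := by rw [Real.rpow_one]; norm_num
    exact ⟨this.le, by simp [this]; norm_num⟩
  · have hstrict : 3 * ζ^2 < (4:ℝ)^ζ - 1 := by
      rcases le_or_gt ζ 0.8 with h | h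
      · exact small_case ζ h0 h
      · exact large_case ζ h.le hlt
    have hlt' : ζ^2 / ((4:ℝ)^ζ - 1) < 1/3 := by
      rw [div_lt_div_iff₀ hpos (by norm_num)]; linarith
    exact ⟨hlt'.le, ⟨fun h => absurd h hlt'.ne, fun h => absurd h hlt.ne⟩⟩
end

section
/- Let ζ ∈ (0,1] and let z be a real random variable satisfying E[exp(jζ z)] = (jζ)^{jζ} for every positive integer j. Then for every t in T (where T = (0,∞) if 0 < ζ < 1 and T = (0, e^{-1}) if ζ = 1), E[exp(t ζ^{-ζ} exp(ζ z))] = Σ_{j=0}^∞ t^j j^{ζj}/j! = M_ζ(t) < ∞. -/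
open MeasureTheory

lemma pow_self_le_exp_mul_factorial (n : ℕ) : (n:ℝ)^n ≤ Real.exp n * n.factorial := by
  have h := Real.sum_le_exp_of_nonneg (x := (n:ℝ)) (Nat.cast_nonneg n) (n+1)
  have h2 : (n:ℝ)^n / n.factorial ≤ Real.exp n := by
    refine le_trans ?_ h
    exact Finset.single_le_sum (f := fun i => (n:ℝ)^i / i.factorial)
      (fun i _ => by positivity) (Finset.self_mem_range_succ n)
  have hfac : (0:ℝ) < n.factorial := by positivity
  calc (n:ℝ)^n = (n:ℝ)^n / n.factorial * n.factorial := by field_simp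
    _ ≤ Real.exp n * n.factorial := by nlinarith

lemma term_bound (ζ t : ℝ) (ht : 0 ≤ t) (j : ℕ) (hj : 1 ≤ j) :
    t^j * (j:ℝ)^(ζ*j)/(j.factorial : ℝ) ≤ (t * Real.exp 1 * (j:ℝ)^(ζ-1))^j := by
  have hj0 : (0:ℝ) < j := by exact_mod_cast hj
  have hr : (j:ℝ)^(ζ*(j:ℕ)) = ((j:ℝ)^(ζ-1))^j * (j:ℝ)^j := by
    rw [← Real.rpow_natCast ((j:ℝ)^(ζ-1)) j, ← Real.rpow_natCast (j:ℝ) j,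
      ← Real.rpow_mul hj0.le, ← Real.rpow_add hj0]
    ring_nf
  have hfac : (0:ℝ) < j.factorial := by positivity
  have hjj : (j:ℝ)^j ≤ Real.exp j * j.factorial := pow_self_le_exp_mul_factorial j
  have hexp : Real.exp (j:ℕ) = (Real.exp 1)^j := by
    rw [← Real.exp_nat_mul]; norm_num
  rw [hr, mul_pow, mul_pow]
  rw [div_le_iff₀ hfac]
  have h1 : (0:ℝ) ≤ t^j * ((j:ℝ)^(ζ-1))^j := by positivity
  calc t ^ j * (((j:ℝ) ^ (ζ - 1)) ^ j * (j:ℝ) ^ j)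
      = t^j * ((j:ℝ)^(ζ-1))^j * (j:ℝ)^j := by ring
    _ ≤ t^j * ((j:ℝ)^(ζ-1))^j * (Real.exp j * j.factorial) := by
        exact mul_le_mul_of_nonneg_left hjj h1
    _ = t ^ j * ((Real.exp 1)^j * ((j:ℝ) ^ (ζ - 1)) ^ j) * (j.factorial:ℝ) := by
        rw [hexp]; ring
    _ = t ^ j * Real.exp 1 ^ j * ((j:ℝ) ^ (ζ - 1)) ^ j * (j.factorial:ℝ) := by ring

lemma summable_M (ζ t : ℝ) (hζ0 : 0 < ζ) (ht : 0 < t)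
    (h : ζ < 1 ∨ (ζ = 1 ∧ t < (Real.exp 1)⁻¹)) :
    Summable (fun j : ℕ => t ^ j * (j : ℝ) ^ (ζ * j) / (j.factorial : ℝ)) := by
  have hnn : ∀ j : ℕ, 0 ≤ t ^ j * (j : ℝ) ^ (ζ * j) / (j.factorial : ℝ) := fun j => by
    have : (0:ℝ) ≤ (j : ℝ) ^ (ζ * j) := Real.rpow_nonneg (Nat.cast_nonneg j) _
    positivity
  rcases h with h | ⟨hζ1, ht1⟩
  · -- ζ < 1 : eventual comparison with (1/2)^j
    have htend : Filter.Tendsto (fun j : ℕ => t * Real.exp 1 * (j:ℝ)^(ζ-1))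
        Filter.atTop (nhds 0) := by
      have h1 : Filter.Tendsto (fun x : ℝ => x ^ (-(1-ζ))) Filter.atTop (nhds 0) :=
        tendsto_rpow_neg_atTop (by linarith)
      have h2 : Filter.Tendsto (fun j : ℕ => (j:ℝ)^(ζ-1)) Filter.atTop (nhds 0) := by
        have := h1.comp tendsto_natCast_atTop_atTop (α := ℕ)
        simpa [Function.comp_def, neg_sub] using this
      simpa using h2.const_mul (t * Real.exp 1)
    have hev : ∀ᶠ j : ℕ in Filter.atTop, t * Real.exp 1 * (j:ℝ)^(ζ-1) < 1/2 :=
      htend.eventually_lt_const (by norm_num)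
    refine summable_of_isBigO_nat (g := fun j : ℕ => (1/2:ℝ)^j)
      (summable_geometric_of_lt_one (by norm_num) (by norm_num)) ?_
    rw [Asymptotics.isBigO_iff]
    refine ⟨1, ?_⟩
    filter_upwards [hev, Filter.eventually_ge_atTop 1] with j hj hj1
    have hq : (0:ℝ) ≤ t * Real.exp 1 * (j:ℝ)^(ζ-1) := by
      have : (0:ℝ) ≤ (j:ℝ)^(ζ-1) := Real.rpow_nonneg (Nat.cast_nonneg j) _
      positivity
    have hb := term_bound ζ t ht.le j hj1
    have hb2 : (t * Real.exp 1 * (j:ℝ)^(ζ-1))^j ≤ (1/2:ℝ)^j :=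
      pow_le_pow_left₀ hq hj.le j
    rw [Real.norm_eq_abs, Real.norm_eq_abs, abs_of_nonneg (hnn j),
      abs_of_nonneg (by positivity : (0:ℝ) ≤ (1/2:ℝ)^j), one_mul]
    exact hb.trans hb2
  · -- ζ = 1
    subst hζ1
    have hte : t * Real.exp 1 < 1 := by
      have := mul_lt_mul_of_pos_right ht1 (Real.exp_pos 1)
      rwa [inv_mul_cancel₀ (Real.exp_pos 1).ne'] at this
    refine Summable.of_nonneg_of_le hnn (fun j => ?_)
      (summable_geometric_of_lt_one (by positivity) hte)
    rcases Nat.eq_zero_or_pos j with rfl | hj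
    · simp
    · have hb := term_bound 1 t ht.le j hj
      simpa using hb

/-- Let `ζ ∈ (0,1]` and `z` a real random variable with `E[exp(jζz)] = (jζ)^(jζ)` for every
positive integer `j`.  Then for every `t ∈ T` (`T = (0,∞)` if `ζ < 1`, `T = (0,e⁻¹)` if `ζ = 1`),
`E[exp(t ζ^(-ζ) exp(ζ z))] = ∑_{j≥0} t^j j^(ζj)/j! = M_ζ(t) < ∞`. -/
theorem mgf_of_exp {Ω : Type*} [MeasurableSpace Ω] (μ : Measure Ω) [IsProbabilityMeasure μ]
    (ζ : ℝ) (hζ : ζ ∈ Set.Ioc (0 : ℝ) 1) (z : Ω → ℝ) (hmeas : Measurable z)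
    (hmom : ∀ j : ℕ, 0 < j → ∫ ω, Real.exp (j * ζ * z ω) ∂μ = ((j : ℝ) * ζ) ^ ((j : ℝ) * ζ))
    (T : Set ℝ) (hT : (ζ < 1 ∧ T = Set.Ioi 0) ∨ (ζ = 1 ∧ T = Set.Ioo 0 (Real.exp 1)⁻¹))
    (t : ℝ) (htT : t ∈ T) :
    Summable (fun j : ℕ => t ^ j * (j : ℝ) ^ (ζ * j) / (Nat.factorial j : ℝ)) ∧
    ∫ ω, Real.exp (t * ζ ^ (-ζ) * Real.exp (ζ * z ω)) ∂μ =
      ∑' j : ℕ, t ^ j * (j : ℝ) ^ (ζ * j) / (Nat.factorial j : ℝ) := by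
  obtain ⟨hζ0, hζ1⟩ := hζ
  obtain ⟨ht0, hcase⟩ : 0 < t ∧ (ζ < 1 ∨ (ζ = 1 ∧ t < (Real.exp 1)⁻¹)) := by
    rcases hT with ⟨hlt, rfl⟩ | ⟨heq, rfl⟩
    · exact ⟨htT, Or.inl hlt⟩
    · exact ⟨htT.1, Or.inr ⟨heq, htT.2⟩⟩
  have hsum := summable_M ζ t hζ0 ht0 hcase
  refine ⟨hsum, ?_⟩
  set c : ℝ := t * ζ ^ (-ζ) with hc
  have hc0 : 0 < c := mul_pos ht0 (Real.rpow_pos_of_pos hζ0 _)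
  set f : ℕ → Ω → ℝ := fun j ω => c ^ j / (j.factorial : ℝ) * Real.exp (j * ζ * z ω) with hfdef
  -- pointwise expansion of exp
  have hexpx : ∀ x : ℝ, Real.exp x = ∑' n : ℕ, x ^ n / (n.factorial : ℝ) := fun x => by
    rw [Real.exp_eq_exp_ℝ, NormedSpace.exp_eq_tsum_div]
  have hpt : ∀ ω, (∑' j : ℕ, f j ω) = Real.exp (c * Real.exp (ζ * z ω)) := by
    intro ω
    rw [hexpx]
    refine tsum_congr fun j => ?_
    have hej : Real.exp (ζ * z ω) ^ j = Real.exp (j * ζ * z ω) := by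
      rw [← Real.exp_nat_mul]; ring_nf
    rw [mul_pow, hej, hfdef]
    ring
  -- integrability of each exponential moment
  have hgint : ∀ j : ℕ, Integrable (fun ω => Real.exp (j * ζ * z ω)) μ := by
    intro j
    rcases Nat.eq_zero_or_pos j with rfl | hj
    · simpa using integrable_const (1 : ℝ)
    · by_contra h
      have h0 := integral_undef h
      rw [hmom j hj] at h0
      have : (0:ℝ) < ((j : ℝ) * ζ) ^ ((j : ℝ) * ζ) :=
        Real.rpow_pos_of_pos (mul_pos (by exact_mod_cast hj) hζ0) _
      linarith
  have hfi : ∀ j, Integrable (f j) μ := fun j => (hgint j).const_mul _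
  -- value of each integral
  have hint : ∀ j : ℕ, ∫ ω, f j ω ∂μ = t ^ j * (j : ℝ) ^ (ζ * j) / (j.factorial : ℝ) := by
    intro j
    have h1 : ∫ ω, f j ω ∂μ = c ^ j / (j.factorial : ℝ) * ∫ ω, Real.exp (j * ζ * z ω) ∂μ := by
      rw [hfdef]; exact integral_const_mul _ _
    rcases Nat.eq_zero_or_pos j with rfl | hj
    · simp [h1]
    · rw [h1, hmom j hj]
      have hzeta : (ζ ^ (-ζ)) ^ j * ζ ^ ((j:ℝ) * ζ) = 1 := by
        rw [← Real.rpow_natCast (ζ ^ (-ζ)) j, ← Real.rpow_mul hζ0.le, ← Real.rpow_add hζ0,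
          show -ζ * (j:ℝ) + (j:ℝ) * ζ = 0 by ring, Real.rpow_zero]
      have hmr : ((j:ℝ) * ζ) ^ ((j:ℝ) * ζ) = (j:ℝ) ^ ((j:ℝ) * ζ) * ζ ^ ((j:ℝ) * ζ) :=
        Real.mul_rpow (Nat.cast_nonneg j) hζ0.le
      rw [hmr, hc, mul_pow]
      have hcomm : (j:ℝ) ^ ((j:ℝ) * ζ) = (j:ℝ) ^ (ζ * (j:ℝ)) := by rw [mul_comm]
      calc t ^ j * (ζ ^ (-ζ)) ^ j / (j.factorial:ℝ) * ((j:ℝ) ^ ((j:ℝ)*ζ) * ζ ^ ((j:ℝ)*ζ))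
          = t ^ j * (j:ℝ) ^ ((j:ℝ)*ζ) * ((ζ ^ (-ζ)) ^ j * ζ ^ ((j:ℝ)*ζ)) / (j.factorial:ℝ) := by
            ring
        _ = t ^ j * (j:ℝ) ^ (ζ * j) / (j.factorial:ℝ) := by rw [hzeta, hcomm]; ring
  -- measurability
  have hmeas' : ∀ j : ℕ, AEStronglyMeasurable (f j) μ := fun j =>
    ((Real.measurable_exp.comp ((measurable_const.mul hmeas))).const_mul _).aestronglyMeasurable
  -- finiteness of the sum of lintegrals
  have hnn : ∀ j : ℕ, 0 ≤ t ^ j * (j : ℝ) ^ (ζ * j) / (j.factorial : ℝ) := fun j => by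
    have : (0:ℝ) ≤ (j : ℝ) ^ (ζ * j) := Real.rpow_nonneg (Nat.cast_nonneg j) _
    positivity
  have hnorm : (∑' j : ℕ, ∫⁻ ω, ‖f j ω‖₊ ∂μ) ≠ ⊤ := by
    have heq : ∀ j : ℕ, ∫⁻ ω, ‖f j ω‖₊ ∂μ
        = ENNReal.ofReal (t ^ j * (j : ℝ) ^ (ζ * j) / (j.factorial : ℝ)) := by
      intro j
      have hpos : (0 : Ω → ℝ) ≤ᵐ[μ] f j := Filter.Eventually.of_forall fun ω => by
        simp only [hfdef, Pi.zero_apply]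
        positivity
      rw [← hint j, ofReal_integral_eq_lintegral_ofReal (hfi j) hpos]
      refine lintegral_congr fun ω => ?_
      have hnng : (0:ℝ) ≤ f j ω := by simp only [hfdef]; positivity
      exact Real.enorm_eq_ofReal hnng
    rw [tsum_congr heq, ← ENNReal.ofReal_tsum_of_nonneg hnn hsum]
    exact ENNReal.ofReal_ne_top
  have hfun : (fun ω => Real.exp (t * ζ ^ (-ζ) * Real.exp (ζ * z ω)))
      = fun ω => ∑' j : ℕ, f j ω := funext fun ω => (hpt ω).symm
  calc ∫ ω, Real.exp (t * ζ ^ (-ζ) * Real.exp (ζ * z ω)) ∂μ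
      = ∫ ω, ∑' j : ℕ, f j ω ∂μ := by rw [hfun]
    _ = ∑' j : ℕ, ∫ ω, f j ω ∂μ := integral_tsum hmeas' hnorm
    _ = ∑' j : ℕ, t ^ j * (j : ℝ) ^ (ζ * j) / (j.factorial : ℝ) := tsum_congr hint
end

section
/- Let ζ ∈ (0,1], δ ∈ ℝ, ε > 0, and let z_1,...,z_k be i.i.d. real random variables satisfying E[exp(jζ z_1)] = (jζ)^{jζ} for every positive integer j. Define the log-mean estimator δ̂ = ζ^{-1} log(ζ^{-ζ} k^{-1} Σ_{j=1}^k exp(ζ(δ + z_j))). Then for every t in T (where T = (0,∞) if 0 < ζ < 1 and T = (0, e^{-1}) if ζ = 1), P(δ̂ - δ ≥ ε) ≤ exp(-t k e^{ζε}) · (M_ζ(t))^k, where M_ζ(t) = Σ_{j=0}^∞ t^j j^{ζj}/j!. -/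
open MeasureTheory ProbabilityTheory

lemma M_summable {ζ t : ℝ} (hζ1 : ζ ≤ 1) (ht : 0 < t)
    (ht1 : ζ = 1 → t < (Real.exp 1)⁻¹) :
    Summable (fun n : ℕ => t ^ n * (n : ℝ) ^ (ζ * n) / (Nat.factorial n : ℝ)) := by
  have key : ∀ n : ℕ, 1 ≤ n →
      t ^ n * (n : ℝ) ^ (ζ * n) / (Nat.factorial n : ℝ)
        ≤ (t * Real.exp 1 * (n : ℝ) ^ (ζ - 1)) ^ n := by
    intro n hn
    have hn0 : (0 : ℝ) < n := by exact_mod_cast hn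
    have hfac : (0 : ℝ) < (Nat.factorial n : ℝ) := by exact_mod_cast n.factorial_pos
    have hsplit : (n : ℝ) ^ (ζ * n) = (n : ℝ) ^ ((ζ - 1) * n) * (n : ℝ) ^ (n : ℕ) := by
      rw [← Real.rpow_natCast (n : ℝ) n, ← Real.rpow_add hn0]
      ring_nf
    have hnn : (n : ℝ) ^ (n : ℕ) / (Nat.factorial n : ℝ) ≤ Real.exp 1 ^ n := by
      calc (n : ℝ) ^ (n : ℕ) / (Nat.factorial n : ℝ) ≤ Real.exp (n : ℝ) :=
            Real.pow_div_factorial_le_exp _ hn0.le n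
        _ = Real.exp 1 ^ n := by rw [Real.exp_one_pow]
    have hrw : (t * Real.exp 1 * (n : ℝ) ^ (ζ - 1)) ^ n
        = t ^ n * Real.exp 1 ^ n * (n : ℝ) ^ ((ζ - 1) * n) := by
      rw [mul_pow, mul_pow, ← Real.rpow_natCast ((n:ℝ) ^ (ζ-1)) n, ← Real.rpow_mul hn0.le]
    rw [hrw, hsplit]
    have h1 : t ^ n * ((n : ℝ) ^ ((ζ - 1) * n) * (n : ℝ) ^ (n : ℕ)) / (Nat.factorial n : ℝ)
        = t ^ n * (n : ℝ) ^ ((ζ - 1) * n) * ((n : ℝ) ^ (n : ℕ) / (Nat.factorial n : ℝ)) := by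
      ring
    rw [h1]
    have h2 : t ^ n * (n : ℝ) ^ ((ζ - 1) * n) * ((n : ℝ) ^ (n:ℕ) / (Nat.factorial n : ℝ))
        ≤ t ^ n * (n : ℝ) ^ ((ζ - 1) * n) * Real.exp 1 ^ n := by
      apply mul_le_mul_of_nonneg_left hnn
      positivity
    linarith [h2]
  obtain ⟨r, hr0, hr1, hbd⟩ : ∃ r : ℝ, 0 ≤ r ∧ r < 1 ∧
      ∀ᶠ n : ℕ in Filter.atTop, t * Real.exp 1 * (n : ℝ) ^ (ζ - 1) ≤ r := by
    rcases eq_or_lt_of_le hζ1 with h1 | h1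
    · refine ⟨t * Real.exp 1, by positivity, ?_, ?_⟩
      · have := ht1 h1
        rw [inv_eq_one_div, lt_div_iff₀ (Real.exp_pos 1)] at this
        linarith
      · filter_upwards [Filter.eventually_ge_atTop 1] with n hn
        rw [h1]
        simp [Real.rpow_zero]
    · refine ⟨1/2, by norm_num, by norm_num, ?_⟩
      have htend : Filter.Tendsto (fun n : ℕ => t * Real.exp 1 * (n : ℝ) ^ (ζ - 1))
          Filter.atTop (nhds (t * Real.exp 1 * 0)) := by
        apply Filter.Tendsto.const_mul
        have h : Filter.Tendsto (fun x : ℝ => x ^ (ζ - 1)) Filter.atTop (nhds 0) := by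
          have := tendsto_rpow_neg_atTop (y := 1 - ζ) (by linarith)
          simpa [neg_sub] using this
        exact h.comp tendsto_natCast_atTop_atTop
      rw [mul_zero] at htend
      exact htend.eventually_le_const (by norm_num)
  have hgeo : Summable (fun n : ℕ => r ^ n) := summable_geometric_of_lt_one hr0 hr1
  apply summable_of_isBigO_nat hgeo
  apply Asymptotics.IsBigO.of_bound 1
  filter_upwards [hbd, Filter.eventually_ge_atTop 1] with n hbn hn1
  have hn0 : (0 : ℝ) < n := by exact_mod_cast hn1
  have hpos : (0:ℝ) ≤ t * Real.exp 1 * (n : ℝ) ^ (ζ - 1) := by positivity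
  have hle : t ^ n * (n : ℝ) ^ (ζ * n) / (Nat.factorial n : ℝ) ≤ r ^ n :=
    le_trans (key n hn1) (pow_le_pow_left₀ hpos hbn n)
  have hnn : (0:ℝ) ≤ t ^ n * (n : ℝ) ^ (ζ * n) / (Nat.factorial n : ℝ) := by positivity
  simp only [Real.norm_eq_abs, one_mul]
  rw [abs_of_nonneg hnn, abs_of_nonneg (pow_nonneg hr0 n)]
  exact hle

lemma lintegral_prod_of_indep {Ω : Type*} [MeasurableSpace Ω] {μ : Measure Ω}
    [IsProbabilityMeasure μ] {ι : Type*} {f : ι → Ω → ENNReal}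
    (hmeas : ∀ i, Measurable (f i)) (hind : iIndepFun f μ)
    (s : Finset ι) :
    ∫⁻ ω, ∏ j ∈ s, f j ω ∂μ = ∏ j ∈ s, ∫⁻ ω, f j ω ∂μ := by
  classical
  induction s using Finset.induction_on with
  | empty => simp
  | @insert i s hi ih =>
    simp only [Finset.prod_insert hi]
    have hindep2 : IndepFun (∏ j ∈ s, f j) (f i) μ :=
      hind.indepFun_finsetProd_of_notMem hmeas hi
    have hm : Measurable (∏ j ∈ s, f j) := by
      have := Finset.measurable_prod s (fun j (_ : j ∈ s) => hmeas j)
      convert this using 1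
      ext ω; rw [Finset.prod_apply]
    have key := lintegral_mul_eq_lintegral_mul_lintegral_of_indepFun''
      hm.aemeasurable (hmeas i).aemeasurable hindep2
    calc ∫⁻ ω, f i ω * ∏ j ∈ s, f j ω ∂μ
        = ∫⁻ ω, (∏ j ∈ s, f j) ω * f i ω ∂μ := by
          apply lintegral_congr; intro ω; rw [mul_comm, Finset.prod_apply]
      _ = (∫⁻ ω, (∏ j ∈ s, f j) ω ∂μ) * ∫⁻ ω, f i ω ∂μ := key
      _ = (∫⁻ ω, ∏ j ∈ s, f j ω ∂μ) * ∫⁻ ω, f i ω ∂μ := by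
          congr 1; apply lintegral_congr; intro ω; rw [Finset.prod_apply]
      _ = (∫⁻ ω, f i ω ∂μ) * ∏ j ∈ s, ∫⁻ ω, f j ω ∂μ := by rw [ih, mul_comm]

lemma mgf_single {Ω : Type*} [MeasurableSpace Ω] (μ : Measure Ω) [IsProbabilityMeasure μ]
    {ζ t : ℝ} (hζ0 : 0 < ζ) (ht : 0 < t) {w : Ω → ℝ} (hw : Measurable w)
    (hmom : ∀ j : ℕ, 0 < j →
      ∫ ω, Real.exp (j * ζ * w ω) ∂μ = ((j : ℝ) * ζ) ^ ((j : ℝ) * ζ)) :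
    ∫⁻ ω, ENNReal.ofReal (Real.exp (t * (ζ ^ (-ζ) * Real.exp (ζ * w ω)))) ∂μ
      = ∑' n : ℕ, ENNReal.ofReal (t ^ n * (n : ℝ) ^ (ζ * n) / (Nat.factorial n : ℝ)) := by
  set c : ℕ → ℝ := fun n => t ^ n * ζ ^ (-(ζ * n)) / (Nat.factorial n : ℝ) with hc
  have hcn : ∀ n, 0 ≤ c n := by
    intro n
    have : (0:ℝ) < ζ ^ (-(ζ * n)) := Real.rpow_pos_of_pos hζ0 _
    have : (0:ℝ) < (Nat.factorial n : ℝ) := by exact_mod_cast n.factorial_pos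
    positivity
  have hterm : ∀ (n : ℕ) (x : ℝ),
      (t * (ζ ^ (-ζ) * Real.exp (ζ * x))) ^ n / (Nat.factorial n : ℝ)
        = c n * Real.exp ((n : ℝ) * ζ * x) := by
    intro n x
    have h1 : (ζ ^ (-ζ) : ℝ) ^ n = ζ ^ (-(ζ * n)) := by
      rw [← Real.rpow_natCast (ζ ^ (-ζ)) n, ← Real.rpow_mul hζ0.le]
      ring_nf
    have h2 : Real.exp (ζ * x) ^ n = Real.exp ((n : ℝ) * ζ * x) := by
      rw [← Real.exp_nat_mul]
      ring_nf
    rw [mul_pow, mul_pow, h1, h2, hc]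
    ring
  have hexp : ∀ x : ℝ, ENNReal.ofReal (Real.exp (t * (ζ ^ (-ζ) * Real.exp (ζ * x))))
      = ∑' n : ℕ, ENNReal.ofReal (c n * Real.exp ((n : ℝ) * ζ * x)) := by
    intro x
    set y := t * (ζ ^ (-ζ) * Real.exp (ζ * x)) with hy
    have hy0 : 0 ≤ y := by
      have := Real.rpow_pos_of_pos hζ0 (-ζ)
      have := Real.exp_pos (ζ * x)
      positivity
    have hser : Real.exp y = ∑' n : ℕ, y ^ n / (Nat.factorial n : ℝ) := by
      rw [Real.exp_eq_exp_ℝ, NormedSpace.exp_eq_tsum_div]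
    rw [hser, ENNReal.ofReal_tsum_of_nonneg (fun n => by positivity)
      (Real.summable_pow_div_factorial y)]
    exact tsum_congr fun n => by rw [hterm n x]
  simp only [hexp]
  rw [lintegral_tsum (f := fun (n : ℕ) (ω : Ω) => ENNReal.ofReal (c n * Real.exp ((n:ℝ) * ζ * w ω)))
    (fun n => (((hw.const_mul ((n : ℝ) * ζ)).exp.const_mul (c n)).ennreal_ofReal).aemeasurable)]
  apply tsum_congr
  intro n
  -- pull out constant
  have hmul : ∀ ω, ENNReal.ofReal (c n * Real.exp ((n:ℝ) * ζ * w ω))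
      = ENNReal.ofReal (c n) * ENNReal.ofReal (Real.exp ((n:ℝ) * ζ * w ω)) :=
    fun ω => ENNReal.ofReal_mul (hcn n)
  simp only [hmul]
  rw [lintegral_const_mul _ ((hw.const_mul ((n : ℝ) * ζ)).exp.ennreal_ofReal)]
  rcases Nat.eq_zero_or_pos n with rfl | hn
  · simp [hc, Real.rpow_zero]
  · -- n ≥ 1
    have hnζ : (0:ℝ) < (n : ℝ) * ζ := by
      have : (0:ℝ) < (n:ℝ) := by exact_mod_cast hn
      positivity
    have hval : (0:ℝ) < ((n : ℝ) * ζ) ^ ((n : ℝ) * ζ) := Real.rpow_pos_of_pos hnζ _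
    have hint : Integrable (fun ω => Real.exp ((n:ℝ) * ζ * w ω)) μ := by
      by_contra hni
      have h := hmom n hn
      rw [integral_undef hni] at h
      exact hval.ne h
    have hlint : ∫⁻ ω, ENNReal.ofReal (Real.exp ((n:ℝ) * ζ * w ω)) ∂μ
        = ENNReal.ofReal (((n : ℝ) * ζ) ^ ((n : ℝ) * ζ)) := by
      rw [← ofReal_integral_eq_lintegral_ofReal hint
        (Filter.Eventually.of_forall fun ω => (Real.exp_pos _).le), hmom n hn]
    rw [hlint, ← ENNReal.ofReal_mul (hcn n)]
    congr 1
    have hsplit : ((n : ℝ) * ζ) ^ ((n : ℝ) * ζ)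
        = (n : ℝ) ^ ((n : ℝ) * ζ) * ζ ^ ((n : ℝ) * ζ) :=
      Real.mul_rpow (Nat.cast_nonneg n) hζ0.le
    have hcancel : ζ ^ (-(ζ * (n:ℝ))) * ζ ^ ((n : ℝ) * ζ) = 1 := by
      rw [← Real.rpow_add hζ0]
      ring_nf
      exact Real.rpow_zero ζ
    calc c n * ((n : ℝ) * ζ) ^ ((n : ℝ) * ζ)
        = t ^ n / (Nat.factorial n : ℝ) * (ζ ^ (-(ζ * (n:ℝ))) * ζ ^ ((n : ℝ) * ζ))
          * (n : ℝ) ^ ((n : ℝ) * ζ) := by rw [hc, hsplit]; ring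
      _ = t ^ n * (n : ℝ) ^ (ζ * (n:ℝ)) / (Nat.factorial n : ℝ) := by
          rw [hcancel, mul_comm ((n:ℝ)) ζ]; ring

/-- Chernoff-type tail bound for the log-mean estimator.  Let `ζ ∈ (0,1]`, `δ ∈ ℝ`, `ε > 0`,
and `z₁,…,z_k` i.i.d. real random variables with `E[exp(jζz₁)] = (jζ)^(jζ)` for all positive
integers `j`.  With `δ̂ = ζ⁻¹ log(ζ^(-ζ) k⁻¹ ∑_j exp(ζ(δ + z_j)))`, for every `t ∈ T`
(`T = (0,∞)` if `ζ < 1`, `T = (0,e⁻¹)` if `ζ = 1`),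
`P(δ̂ - δ ≥ ε) ≤ exp(-tk e^(ζε)) M_ζ(t)^k`, where `M_ζ(t) = ∑_{j≥0} t^j j^(ζj)/j!`. -/
theorem log_mean_tail_bound {Ω : Type*} [MeasurableSpace Ω] (μ : Measure Ω)
    [IsProbabilityMeasure μ] (ζ δ ε : ℝ) (hζ : ζ ∈ Set.Ioc (0 : ℝ) 1) (hε : 0 < ε)
    (k : ℕ) (hk : 0 < k) (z : Fin k → Ω → ℝ) (hmeas : ∀ j, Measurable (z j))
    (hindep : iIndepFun z μ)
    (hident : ∀ j, IdentDistrib (z j) (z ⟨0, hk⟩) μ μ)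
    (hmom : ∀ j : ℕ, 0 < j →
      ∫ ω, Real.exp (j * ζ * z ⟨0, hk⟩ ω) ∂μ = ((j : ℝ) * ζ) ^ ((j : ℝ) * ζ))
    (T : Set ℝ) (hT : (ζ < 1 ∧ T = Set.Ioi 0) ∨ (ζ = 1 ∧ T = Set.Ioo 0 (Real.exp 1)⁻¹))
    (t : ℝ) (htT : t ∈ T) :
    μ {ω | ζ⁻¹ * Real.log (ζ ^ (-ζ) * (k : ℝ)⁻¹ * ∑ j, Real.exp (ζ * (δ + z j ω))) - δ ≥ ε} ≤
      ENNReal.ofReal (Real.exp (-(t * k * Real.exp (ζ * ε))) *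
        (∑' j : ℕ, t ^ j * (j : ℝ) ^ (ζ * j) / (Nat.factorial j : ℝ)) ^ k) := by
  obtain ⟨hζ0, hζ1⟩ := hζ
  -- facts about t
  have ht0 : 0 < t := by
    rcases hT with ⟨_, rfl⟩ | ⟨_, rfl⟩
    · exact htT
    · exact htT.1
  have ht1 : ζ = 1 → t < (Real.exp 1)⁻¹ := by
    intro h1
    rcases hT with ⟨hlt, rfl⟩ | ⟨_, rfl⟩
    · exact absurd h1 hlt.ne
    · exact htT.2
  have hζζ : (0:ℝ) < ζ ^ (-ζ) := Real.rpow_pos_of_pos hζ0 _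
  set M : ℝ := ∑' j : ℕ, t ^ j * (j : ℝ) ^ (ζ * j) / (Nat.factorial j : ℝ) with hM
  have hMsum := M_summable hζ1 ht0 ht1
  have hM0 : 0 ≤ M := tsum_nonneg fun n => by
    have h2 : (0:ℝ) < (Nat.factorial n : ℝ) := by exact_mod_cast n.factorial_pos
    have h3 : (0:ℝ) ≤ (n:ℝ) ^ (ζ * n) := Real.rpow_nonneg (Nat.cast_nonneg n) _
    positivity
  -- the transformed random variables
  set φ : ℝ → ENNReal := fun x => ENNReal.ofReal (Real.exp (t * (ζ ^ (-ζ) * Real.exp (ζ * x))))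
    with hφ
  have hφmeas : Measurable φ := by
    apply Measurable.ennreal_ofReal
    exact (((measurable_id.const_mul ζ).exp.const_mul (ζ ^ (-ζ))).const_mul t).exp
  set g : Fin k → Ω → ENNReal := fun j ω => φ (z j ω) with hg
  have hgmeas : ∀ j, Measurable (g j) := fun j => hφmeas.comp (hmeas j)
  have hgind : iIndepFun g μ :=
    hindep.comp (fun _ => φ) (fun _ => hφmeas)
  -- the common value of the lintegral
  have hMg : ∀ j, ∫⁻ ω, g j ω ∂μ = ENNReal.ofReal M := by
    intro j
    have h1 : ∫⁻ ω, g j ω ∂μ = ∫⁻ ω, g ⟨0, hk⟩ ω ∂μ := by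
      rw [hg]
      simp only
      rw [← lintegral_map hφmeas (hmeas j), ← lintegral_map hφmeas (hmeas ⟨0, hk⟩),
        (hident j).map_eq]
    rw [h1]
    have h2 := mgf_single μ hζ0 ht0 (hmeas ⟨0, hk⟩) hmom
    rw [hg]
    simp only
    rw [hφ]
    simp only
    rw [h2, hM]
    rw [ENNReal.ofReal_tsum_of_nonneg (fun n => by
      have h2 : (0:ℝ) < (Nat.factorial n : ℝ) := by exact_mod_cast n.factorial_pos
      have h3 : (0:ℝ) ≤ (n:ℝ) ^ (ζ * n) := Real.rpow_nonneg (Nat.cast_nonneg n) _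
      positivity) hMsum]
  -- Markov / Chernoff step
  set a : ℝ := t * (k * Real.exp (ζ * ε)) with ha
  have hsubset : {ω | ζ⁻¹ * Real.log (ζ ^ (-ζ) * (k : ℝ)⁻¹ * ∑ j, Real.exp (ζ * (δ + z j ω)))
      - δ ≥ ε} ⊆ {ω | ENNReal.ofReal (Real.exp a) ≤ ∏ j, g j ω} := by
    intro ω hω
    simp only [Set.mem_setOf_eq] at hω ⊢
    set S : ℝ := ∑ j, ζ ^ (-ζ) * Real.exp (ζ * z j ω) with hS
    have hA : ζ ^ (-ζ) * (k : ℝ)⁻¹ * ∑ j, Real.exp (ζ * (δ + z j ω))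
        = (k : ℝ)⁻¹ * Real.exp (ζ * δ) * S := by
      rw [hS, Finset.mul_sum, Finset.mul_sum]
      apply Finset.sum_congr rfl
      intro j _
      rw [mul_add, Real.exp_add]
      ring
    have hk0 : (0:ℝ) < k := by exact_mod_cast hk
    have hSpos : 0 < S := by
      rw [hS]
      apply Finset.sum_pos
      · intro j _
        exact mul_pos hζζ (Real.exp_pos _)
      · exact Finset.univ_nonempty_iff.mpr ⟨⟨0, hk⟩⟩
    have hApos : 0 < ζ ^ (-ζ) * (k : ℝ)⁻¹ * ∑ j, Real.exp (ζ * (δ + z j ω)) := by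
      rw [hA]; positivity
    -- from the event, S ≥ k e^(ζ ε)
    have hlog : ζ * (ε + δ) ≤ Real.log (ζ ^ (-ζ) * (k : ℝ)⁻¹ * ∑ j, Real.exp (ζ * (δ + z j ω))) := by
      have := hω
      rw [ge_iff_le, le_sub_iff_add_le, inv_mul_eq_div, le_div_iff₀ hζ0] at this
      linarith [this]
    have hexp : Real.exp (ζ * (ε + δ)) ≤ (k : ℝ)⁻¹ * Real.exp (ζ * δ) * S := by
      rw [← hA, ← Real.exp_log hApos]
      exact Real.exp_le_exp.mpr hlog
    have hSk : (k : ℝ) * Real.exp (ζ * ε) ≤ S := by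
      have hed : (0:ℝ) < Real.exp (ζ * δ) := Real.exp_pos _
      have h1 : Real.exp (ζ * (ε + δ)) = Real.exp (ζ * ε) * Real.exp (ζ * δ) := by
        rw [← Real.exp_add]; ring_nf
      have hre : (k : ℝ)⁻¹ * Real.exp (ζ * δ) * S = ((k : ℝ)⁻¹ * S) * Real.exp (ζ * δ) := by
        ring
      rw [h1, hre] at hexp
      have h3 : Real.exp (ζ * ε) ≤ (k : ℝ)⁻¹ * S := le_of_mul_le_mul_right hexp hed
      calc (k : ℝ) * Real.exp (ζ * ε) ≤ (k : ℝ) * ((k : ℝ)⁻¹ * S) :=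
            mul_le_mul_of_nonneg_left h3 hk0.le
        _ = S := by field_simp
    -- conclude the pointwise inequality
    have hprod : (∏ j, g j ω) = ENNReal.ofReal (Real.exp (t * S)) := by
      rw [hS, Finset.mul_sum, Real.exp_sum, ENNReal.ofReal_prod_of_nonneg
        (fun j _ => (Real.exp_pos _).le)]
    rw [hprod]
    apply ENNReal.ofReal_le_ofReal
    apply Real.exp_le_exp.mpr
    rw [ha]
    exact mul_le_mul_of_nonneg_left hSk ht0.le
  -- apply Markov's inequality
  have hprodmeas : Measurable (fun ω => ∏ j, g j ω) :=
    Finset.measurable_prod Finset.univ (fun j _ => hgmeas j)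
  have hmarkov := mul_meas_ge_le_lintegral₀ (μ := μ) hprodmeas.aemeasurable
    (ENNReal.ofReal (Real.exp a))
  have hlint : ∫⁻ ω, ∏ j, g j ω ∂μ = (ENNReal.ofReal M) ^ k := by
    rw [lintegral_prod_of_indep hgmeas hgind Finset.univ]
    simp [hMg, Finset.prod_const, Finset.card_univ]
  have hea : (0:ℝ) < Real.exp a := Real.exp_pos _
  have hne0 : ENNReal.ofReal (Real.exp a) ≠ 0 := by
    simp [ENNReal.ofReal_eq_zero, not_le, hea]
  have hnetop : ENNReal.ofReal (Real.exp a) ≠ ⊤ := ENNReal.ofReal_ne_top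
  calc μ {ω | ζ⁻¹ * Real.log (ζ ^ (-ζ) * (k : ℝ)⁻¹ * ∑ j, Real.exp (ζ * (δ + z j ω))) - δ ≥ ε}
      ≤ μ {ω | ENNReal.ofReal (Real.exp a) ≤ ∏ j, g j ω} := measure_mono hsubset
    _ ≤ (ENNReal.ofReal (Real.exp a))⁻¹ * ((ENNReal.ofReal M) ^ k) := by
        rw [← hlint, ← ENNReal.div_eq_inv_mul,
          ENNReal.le_div_iff_mul_le (Or.inl hne0) (Or.inl hnetop), mul_comm]
        exact hmarkov
    _ = ENNReal.ofReal (Real.exp (-(t * k * Real.exp (ζ * ε))) * M ^ k) := by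
        have hinv : (ENNReal.ofReal (Real.exp a))⁻¹
            = ENNReal.ofReal (Real.exp (-(t * k * Real.exp (ζ * ε)))) := by
          rw [Real.exp_neg, ← ENNReal.ofReal_inv_of_pos hea]
          congr 2
          rw [ha]; ring
        rw [ENNReal.ofReal_mul (Real.exp_pos _).le, ENNReal.ofReal_pow hM0, hinv]
    _ = _ := rfl
end

section
/- Fix ζ ∈ (0,1] and s > 0, and let M_ζ(t) = Σ_{j=0}^∞ t^j j^{ζj}/j!. Then the limit as ε → 0⁺ of ε^{-2}·(log M_ζ(sε) - sε·exp(ζε)) equals s²(4^ζ - 1)/2 - sζ. -/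
open Filter Real

lemma term_le' (ζ : ℝ) (hζ : ζ ∈ Set.Ioc (0:ℝ) 1) {t : ℝ} (ht : 0 ≤ t) (j : ℕ) :
    t ^ j * (j : ℝ) ^ (ζ * j) / (Nat.factorial j : ℝ) ≤ (t * Real.exp 1) ^ j := by
  rw [mul_pow]
  rcases Nat.eq_zero_or_pos j with rfl | hj
  · simp
  have h1 : (1:ℝ) ≤ (j:ℝ) := by exact_mod_cast hj
  have h2 : (j : ℝ) ^ (ζ * j) ≤ (j : ℝ) ^ (j : ℕ) := by
    rw [← Real.rpow_natCast (j:ℝ) j]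
    exact Real.rpow_le_rpow_of_exponent_le h1
      (by nlinarith [hζ.2, (Nat.cast_pos.mpr hj : (0:ℝ) < j)])
  have h3 : ((j:ℝ)) ^ (j:ℕ) / (Nat.factorial j : ℝ) ≤ Real.exp 1 ^ j := by
    calc ((j:ℝ)) ^ (j:ℕ) / (Nat.factorial j : ℝ) ≤ Real.exp (j:ℝ) :=
          Real.pow_div_factorial_le_exp (j:ℝ) (Nat.cast_nonneg j) j
      _ = Real.exp 1 ^ j := by rw [← Real.exp_nat_mul]; ring_nf
  have hfac : (0:ℝ) < (Nat.factorial j : ℝ) := by exact_mod_cast j.factorial_pos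
  have h4 : (j : ℝ) ^ (ζ * j) / (Nat.factorial j : ℝ) ≤ Real.exp 1 ^ j := by
    refine le_trans (by gcongr) h3
  calc t ^ j * (j : ℝ) ^ (ζ * j) / (Nat.factorial j : ℝ)
      = t ^ j * ((j : ℝ) ^ (ζ * j) / (Nat.factorial j : ℝ)) := by ring
    _ ≤ t ^ j * Real.exp 1 ^ j := by
        refine mul_le_mul_of_nonneg_left h4 (pow_nonneg ht j)

lemma summable' (ζ : ℝ) (hζ : ζ ∈ Set.Ioc (0:ℝ) 1) {t : ℝ} (ht : 0 ≤ t)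
    (ht2 : t * Real.exp 1 < 1) :
    Summable (fun j : ℕ => t ^ j * (j : ℝ) ^ (ζ * j) / (Nat.factorial j : ℝ)) := by
  refine Summable.of_nonneg_of_le (fun j => by positivity) (term_le' ζ hζ ht)
    (summable_geometric_of_lt_one (by positivity) ht2)

lemma split' (ζ : ℝ) (hζ : ζ ∈ Set.Ioc (0:ℝ) 1) {t : ℝ} (ht : 0 < t)
    (ht2 : t * Real.exp 1 ≤ 1/2) :
    (∑' j : ℕ, t ^ j * (j : ℝ) ^ (ζ * j) / (Nat.factorial j : ℝ)) =
      1 + t + t ^ 2 * (4:ℝ) ^ ζ / 2 +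
        ∑' i : ℕ, t ^ (i+3) * ((i+3 : ℕ) : ℝ) ^ (ζ * (i+3 : ℕ)) / (Nat.factorial (i+3) : ℝ) := by
  have he : (0:ℝ) < Real.exp 1 := Real.exp_pos 1
  have ht2' : t * Real.exp 1 < 1 := lt_of_le_of_lt ht2 (by norm_num)
  have hsum := summable' ζ hζ ht.le ht2'
  have := Summable.sum_add_tsum_nat_add (f := fun j : ℕ => t ^ j * (j : ℝ) ^ (ζ * j) / (Nat.factorial j : ℝ))
    3 hsum
  rw [← this]
  have h0 : ((0:ℕ):ℝ) ^ (ζ * (0:ℕ)) = 1 := by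
    norm_num
  have h1 : ((1:ℕ):ℝ) ^ (ζ * (1:ℕ)) = 1 := by
    norm_num
  have h2 : ((2:ℕ):ℝ) ^ (ζ * (2:ℕ)) = (4:ℝ) ^ ζ := by
    push_cast
    rw [mul_comm ζ 2, Real.rpow_mul (by norm_num : (0:ℝ) ≤ 2)]
    norm_num
  rw [Finset.sum_range_succ, Finset.sum_range_succ, Finset.sum_range_one]
  rw [h0, h1, h2]
  push_cast
  simp [Nat.factorial]

lemma tail_nonneg' (ζ : ℝ) {t : ℝ} (ht : 0 ≤ t) :
    0 ≤ ∑' i : ℕ, t ^ (i+3) * ((i+3 : ℕ) : ℝ) ^ (ζ * (i+3 : ℕ)) / (Nat.factorial (i+3) : ℝ) :=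
  tsum_nonneg (fun i => by positivity)

lemma tail_le' (ζ : ℝ) (hζ : ζ ∈ Set.Ioc (0:ℝ) 1) {t : ℝ} (ht : 0 < t)
    (ht2 : t * Real.exp 1 ≤ 1/2) :
    (∑' i : ℕ, t ^ (i+3) * ((i+3 : ℕ) : ℝ) ^ (ζ * (i+3 : ℕ)) / (Nat.factorial (i+3) : ℝ))
      ≤ 2 * Real.exp 1 ^ 3 * t ^ 3 := by
  set r := t * Real.exp 1 with hr
  have hr0 : 0 ≤ r := by positivity
  have hr1 : r < 1 := lt_of_le_of_lt ht2 (by norm_num)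
  have hsum := summable' ζ hζ ht.le hr1
  have hgeo : Summable (fun i : ℕ => r ^ (i+3)) := by
    simpa [pow_add] using (summable_geometric_of_lt_one hr0 hr1).mul_right (r ^ 3)
  have h1 : (∑' i : ℕ, t ^ (i+3) * ((i+3 : ℕ) : ℝ) ^ (ζ * (i+3 : ℕ)) / (Nat.factorial (i+3) : ℝ))
      ≤ ∑' i : ℕ, r ^ (i+3) := by
    refine Summable.tsum_le_tsum (fun i => ?_) ((summable_nat_add_iff 3).mpr hsum) hgeo
    exact term_le' ζ hζ ht.le (i+3)
  have h2 : (∑' i : ℕ, r ^ (i+3)) = (1 - r)⁻¹ * r ^ 3 := by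
    calc (∑' i : ℕ, r ^ (i+3)) = ∑' i : ℕ, r ^ i * r ^ 3 := by
          congr 1; ext i; rw [pow_add]
      _ = (∑' i : ℕ, r ^ i) * r ^ 3 := tsum_mul_right
      _ = (1 - r)⁻¹ * r ^ 3 := by rw [tsum_geometric_of_lt_one hr0 hr1]
  have h3 : (1 - r)⁻¹ ≤ 2 := by
    rw [inv_le_comm₀ (by linarith) (by norm_num)]
    linarith
  calc _ ≤ (1 - r)⁻¹ * r ^ 3 := h1.trans h2.le
    _ ≤ 2 * r ^ 3 := by nlinarith [pow_nonneg hr0 3]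
    _ = 2 * Real.exp 1 ^ 3 * t ^ 3 := by rw [hr]; ring

lemma log_aux {A : ℝ} (h0 : 0 ≤ A) (h1 : A ≤ 1/2) :
    |Real.log (1 + A) - A + A ^ 2 / 2| ≤ 2 * A ^ 3 := by
  have habs : |(-A)| < 1 := by rw [abs_neg, abs_of_nonneg h0]; linarith
  have h := Real.abs_log_sub_add_sum_range_le habs 2
  rw [abs_neg, abs_of_nonneg h0] at h
  have e1 : (∑ i ∈ Finset.range 2, (-A) ^ (i + 1) / (i + 1)) + Real.log (1 - -A)
      = Real.log (1 + A) - A + A ^ 2 / 2 := by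
    rw [Finset.sum_range_succ, Finset.sum_range_one]
    push_cast
    ring_nf
  rw [e1] at h
  norm_num at h
  refine h.trans ?_
  rw [div_le_iff₀ (by linarith)]
  nlinarith [pow_nonneg h0 3, pow_nonneg h0 2]

/-- Fix `ζ ∈ (0,1]` and `s > 0`, and let `M_ζ(t) = ∑_{j≥0} t^j j^(ζj)/j!`.  Then
`ε⁻² (log M_ζ(sε) - sε exp(ζε)) → s²(4^ζ - 1)/2 - sζ` as `ε → 0⁺`. -/
theorem tail_constant_limit (ζ : ℝ) (hζ : ζ ∈ Set.Ioc (0 : ℝ) 1) (s : ℝ) (hs : 0 < s) :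
    Tendsto (fun ε : ℝ => (ε ^ 2)⁻¹ *
        (Real.log (∑' j : ℕ, (s * ε) ^ j * (j : ℝ) ^ (ζ * j) / (Nat.factorial j : ℝ)) -
          s * ε * Real.exp (ζ * ε)))
      (nhdsWithin 0 (Set.Ioi 0))
      (nhds (s ^ 2 * ((4 : ℝ) ^ ζ - 1) / 2 - s * ζ)) := by
  have he1p : (0:ℝ) < Real.exp 1 := Real.exp_pos 1
  have h4p : (0:ℝ) < (4:ℝ) ^ ζ := Real.rpow_pos_of_pos (by norm_num) ζ
  set R : ℝ → ℝ := fun t =>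
    ∑' i : ℕ, t ^ (i+3) * ((i+3 : ℕ) : ℝ) ^ (ζ * (i+3 : ℕ)) / (Nat.factorial (i+3) : ℝ) with hR
  set A : ℝ → ℝ := fun ε => s*ε + (s*ε)^2 * (4:ℝ)^ζ/2 + R (s*ε) with hA
  set C1 : ℝ := s + s^2*(4:ℝ)^ζ/2 + 2*Real.exp 1^3*s^3 with hC1
  have hC1p : 0 < C1 := by positivity
  set δ : ℝ := min (1/(2*Real.exp 1*s)) (min 1 (1/(2*C1))) with hδ
  have hδp : 0 < δ := by positivity
  have hmem : Set.Ioo (0:ℝ) δ ∈ nhdsWithin (0:ℝ) (Set.Ioi 0) :=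
    Ioo_mem_nhdsGT_of_mem ⟨le_rfl, hδp⟩
  -- basic facts on Ioo 0 δ
  have key : ∀ ε ∈ Set.Ioo (0:ℝ) δ,
      0 < s * ε ∧ (s * ε) * Real.exp 1 ≤ 1/2 ∧ ε ≤ 1 ∧ ε ≤ 1/(2*C1) := by
    intro ε hε
    obtain ⟨hε0, hεδ⟩ := hε
    have h1 : ε ≤ 1/(2*Real.exp 1*s) := le_trans hεδ.le (min_le_left _ _)
    have h2 : ε ≤ 1 := le_trans hεδ.le ((min_le_right _ _).trans (min_le_left _ _))
    have h3 : ε ≤ 1/(2*C1) := le_trans hεδ.le ((min_le_right _ _).trans (min_le_right _ _))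
    refine ⟨by positivity, ?_, h2, h3⟩
    rw [le_div_iff₀ (by positivity)] at h1
    nlinarith
  have hRb : ∀ ε ∈ Set.Ioo (0:ℝ) δ,
      0 ≤ R (s*ε) ∧ R (s*ε) ≤ 2*Real.exp 1^3*s^3 * ε^3 := by
    intro ε hε
    obtain ⟨ht, ht2, -, -⟩ := key ε hε
    refine ⟨tail_nonneg' ζ (by positivity), ?_⟩
    have := tail_le' ζ hζ ht ht2
    calc R (s*ε) ≤ 2 * Real.exp 1 ^ 3 * (s*ε) ^ 3 := this
      _ = 2*Real.exp 1^3*s^3 * ε^3 := by ring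
  have hAb : ∀ ε ∈ Set.Ioo (0:ℝ) δ, 0 ≤ A ε ∧ A ε ≤ C1 * ε ∧ A ε ≤ 1/2 := by
    intro ε hε
    obtain ⟨ht, ht2, hε1, hεC⟩ := key ε hε
    obtain ⟨hR0, hR1⟩ := hRb ε hε
    have hε0 : 0 < ε := hε.1
    have hA0 : 0 ≤ A ε := by
      simp only [hA]
      positivity
    have h2 : ε^2 ≤ ε := by nlinarith
    have h3 : ε^3 ≤ ε := by nlinarith
    have t1 : (s*ε)^2 * (4:ℝ)^ζ/2 ≤ s^2*(4:ℝ)^ζ/2 * ε := by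
      calc (s*ε)^2 * (4:ℝ)^ζ/2 = (s^2*(4:ℝ)^ζ/2) * ε^2 := by ring
        _ ≤ (s^2*(4:ℝ)^ζ/2) * ε := by gcongr
    have t3 : R (s*ε) ≤ 2*Real.exp 1^3*s^3 * ε := by
      refine hR1.trans ?_
      gcongr
    have hACε : A ε ≤ C1 * ε := by
      simp only [hA, hC1]
      nlinarith
    refine ⟨hA0, hACε, hACε.trans ?_⟩
    calc C1 * ε ≤ C1 * (1/(2*C1)) := by gcongr
      _ = 1/2 := by field_simp
  -- piece 1: log remainder
  have hg1 : Tendsto (fun ε => (ε^2)⁻¹ * (Real.log (1 + A ε) - A ε + (A ε)^2/2))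
      (nhdsWithin 0 (Set.Ioi 0)) (nhds 0) := by
    have hb : Tendsto (fun ε : ℝ => 2*C1^3*ε) (nhdsWithin 0 (Set.Ioi 0)) (nhds 0) := by
      have : Tendsto (fun ε : ℝ => 2*C1^3*ε) (nhds 0) (nhds (2*C1^3*0)) :=
        (continuous_const.mul continuous_id).tendsto 0
      simpa using this.mono_left nhdsWithin_le_nhds
    refine squeeze_zero_norm' ?_ hb
    filter_upwards [hmem] with ε hε
    obtain ⟨hA0, hAC, hA12⟩ := hAb ε hε
    have hε0 : 0 < ε := hε.1
    have h1 : |Real.log (1 + A ε) - A ε + (A ε)^2/2| ≤ 2 * (A ε)^3 := log_aux hA0 hA12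
    have h2 : (A ε)^3 ≤ (C1*ε)^3 := by gcongr
    rw [norm_mul, norm_inv, Real.norm_eq_abs, Real.norm_eq_abs, abs_of_pos (by positivity : (0:ℝ) < ε^2)]
    calc (ε^2)⁻¹ * |Real.log (1 + A ε) - A ε + (A ε)^2/2|
        ≤ (ε^2)⁻¹ * (2*(C1*ε)^3) := by
          refine mul_le_mul_of_nonneg_left (h1.trans (by linarith)) (by positivity)
      _ = 2*C1^3*ε := by field_simp
  -- piece: R/ε² → 0 and R/ε → 0
  have hg4 : Tendsto (fun ε => R (s*ε) / ε^2) (nhdsWithin 0 (Set.Ioi 0)) (nhds 0) := by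
    have hb : Tendsto (fun ε : ℝ => 2*Real.exp 1^3*s^3*ε) (nhdsWithin 0 (Set.Ioi 0)) (nhds 0) := by
      have : Tendsto (fun ε : ℝ => 2*Real.exp 1^3*s^3*ε) (nhds 0) (nhds (2*Real.exp 1^3*s^3*0)) :=
        (continuous_const.mul continuous_id).tendsto 0
      simpa using this.mono_left nhdsWithin_le_nhds
    refine squeeze_zero_norm' ?_ hb
    filter_upwards [hmem] with ε hε
    obtain ⟨hR0, hR1⟩ := hRb ε hε
    have hε0 : 0 < ε := hε.1
    rw [Real.norm_eq_abs, abs_of_nonneg (by positivity)]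
    rw [div_le_iff₀ (by positivity : (0:ℝ) < ε^2)]
    calc R (s*ε) ≤ 2*Real.exp 1^3*s^3*ε^3 := hR1
      _ = 2*Real.exp 1^3*s^3*ε * ε^2 := by ring
  have hgR1 : Tendsto (fun ε => R (s*ε) / ε) (nhdsWithin 0 (Set.Ioi 0)) (nhds 0) := by
    have hb : Tendsto (fun ε : ℝ => 2*Real.exp 1^3*s^3*ε^2) (nhdsWithin 0 (Set.Ioi 0)) (nhds 0) := by
      have : Tendsto (fun ε : ℝ => 2*Real.exp 1^3*s^3*ε^2) (nhds 0) (nhds (2*Real.exp 1^3*s^3*0^2)) :=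
        (continuous_const.mul (continuous_pow 2)).tendsto 0
      simpa using this.mono_left nhdsWithin_le_nhds
    refine squeeze_zero_norm' ?_ hb
    filter_upwards [hmem] with ε hε
    obtain ⟨hR0, hR1⟩ := hRb ε hε
    have hε0 : 0 < ε := hε.1
    rw [Real.norm_eq_abs, abs_of_nonneg (by positivity)]
    rw [div_le_iff₀ hε0]
    calc R (s*ε) ≤ 2*Real.exp 1^3*s^3*ε^3 := hR1
      _ = 2*Real.exp 1^3*s^3*ε^2 * ε := by ring
  -- A/ε → s
  have hAdiv : Tendsto (fun ε => A ε / ε) (nhdsWithin 0 (Set.Ioi 0)) (nhds s) := by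
    have hlin : Tendsto (fun ε : ℝ => s + s^2*(4:ℝ)^ζ/2 * ε) (nhdsWithin 0 (Set.Ioi 0))
        (nhds s) := by
      have : Tendsto (fun ε : ℝ => s + s^2*(4:ℝ)^ζ/2 * ε) (nhds 0)
          (nhds (s + s^2*(4:ℝ)^ζ/2 * 0)) :=
        (continuous_const.add (continuous_const.mul continuous_id)).tendsto 0
      simpa using this.mono_left nhdsWithin_le_nhds
    have := hlin.add hgR1
    rw [add_zero] at this
    refine this.congr' ?_
    filter_upwards [hmem] with ε hε
    have hε0 : ε ≠ 0 := ne_of_gt hε.1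
    simp only [hA]
    field_simp
  have hg2 : Tendsto (fun ε => -((A ε / ε)^2)/2) (nhdsWithin 0 (Set.Ioi 0))
      (nhds (-(s^2)/2)) :=
    ((hAdiv.pow 2).neg).div_const 2
  -- exp slope → ζ
  have hg5 : Tendsto (fun ε => (-s) * ((Real.exp (ζ*ε) - 1)/ε)) (nhdsWithin 0 (Set.Ioi 0))
      (nhds ((-s) * ζ)) := by
    have hd : HasDerivAt (fun x : ℝ => Real.exp (ζ*x)) ζ 0 := by
      have := ((hasDerivAt_id (0:ℝ)).const_mul ζ).exp
      simpa using this
    have hslope := hasDerivAt_iff_tendsto_slope.mp hd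
    have hmono : nhdsWithin (0:ℝ) (Set.Ioi 0) ≤ nhdsWithin (0:ℝ) {(0:ℝ)}ᶜ :=
      nhdsWithin_mono 0 (fun x hx => ne_of_gt hx)
    have h2 := hslope.mono_left hmono
    have h3 : Tendsto (fun ε : ℝ => (Real.exp (ζ*ε) - 1)/ε) (nhdsWithin 0 (Set.Ioi 0))
        (nhds ζ) := by
      refine h2.congr' ?_
      filter_upwards [self_mem_nhdsWithin] with ε (hε : ε ∈ Set.Ioi (0:ℝ))
      simp [slope_def_field, Real.exp_zero]
    exact h3.const_mul (-s)
  -- assemble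
  have hsum : Tendsto (fun ε => (ε^2)⁻¹ * (Real.log (1 + A ε) - A ε + (A ε)^2/2)
        + (-((A ε / ε)^2)/2) + s^2*(4:ℝ)^ζ/2 + R (s*ε)/ε^2
        + (-s) * ((Real.exp (ζ*ε) - 1)/ε))
      (nhdsWithin 0 (Set.Ioi 0))
      (nhds (0 + (-(s^2)/2) + s^2*(4:ℝ)^ζ/2 + 0 + (-s)*ζ)) :=
    (((hg1.add hg2).add tendsto_const_nhds).add hg4).add hg5
  have hval : (0 : ℝ) + (-(s^2)/2) + s^2*(4:ℝ)^ζ/2 + 0 + (-s)*ζ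
      = s ^ 2 * ((4 : ℝ) ^ ζ - 1) / 2 - s * ζ := by ring
  rw [hval] at hsum
  refine hsum.congr' ?_
  filter_upwards [hmem] with ε hε
  obtain ⟨ht, ht2, -, -⟩ := key ε hε
  have hε0 : ε ≠ 0 := ne_of_gt hε.1
  have hsplit : (∑' j : ℕ, (s*ε) ^ j * (j : ℝ) ^ (ζ * j) / (Nat.factorial j : ℝ))
      = 1 + A ε := by
    rw [split' ζ hζ ht ht2]
    simp only [hA, hR]
    ring
  rw [hsplit]
  field_simp
  simp only [hA]
  ring_nf
end
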